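/- Let f, g : [0,∞) × [0,∞) → ℝ be continuous, let h, l : [0,∞) → [0,∞) be continuously differentiable, and let L : [0,∞) → [0,∞) be continuous, locally Lipschitz, strictly positive on [s₀,∞) for s₀ = h(c₁)·l(c₂) > 0, and satisfying ∫_{s₀}^{∞} ds / L(s) < ∞. Suppose f(w,z)·h'(w)·l(z) + g(w,z)·h(w)·l'(z) ≥ L(h(w)·l(z)) ≥ 0 for all w, z ≥ 0. If w, z : [0,T) → [0,∞) are differentiable with w' = f(w,z), z' = g(w,z), w(0) = c₁, z(0) = c₂, then h(w(t))·l(z(t)) ≥ s(t) on [0,T), where s solves s' = L(s), s(0) = s₀; consequently T ≤ ∫_{s₀}^{∞} ds / L(s), i.e. the product h(w)·l(z) and the solution (w,z) blow up in finite time. -/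

import Mathlib

open Set MeasureTheory Filter

/-- Theorem B, part (2), of the paper: if
`f(w,z) h'(w) l(z) + g(w,z) h(w) l'(z) ≥ L(h(w) l(z)) ≥ 0` with
`∫_{s₀}^∞ ds / L(s) < ∞` for `s₀ = h(c₁) l(c₂) > 0`, then along any solution of
`w' = f(w,z)`, `z' = g(w,z)` the product `h(w) l(z)` dominates the solution of
`s' = L(s)`, `s(0) = s₀`, and the existence time satisfies `T ≤ ∫_{s₀}^∞ ds / L(s)`,
i.e. blowup occurs in finite time. -/
theorem blowup_thmB_part2
    (f g : ℝ → ℝ → ℝ) (h l L : ℝ → ℝ) (c₁ c₂ s₀ T : ℝ)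
    (hf_cont : Continuous fun p : ℝ × ℝ => f p.1 p.2)
    (hg_cont : Continuous fun p : ℝ × ℝ => g p.1 p.2)
    (hh_diff : ContDiff ℝ 1 h) (hl_diff : ContDiff ℝ 1 l)
    (hh_nonneg : ∀ x, 0 ≤ x → 0 ≤ h x) (hl_nonneg : ∀ x, 0 ≤ x → 0 ≤ l x)
    (hs₀ : s₀ = h c₁ * l c₂) (hs₀_pos : 0 < s₀)
    (hL_cont : Continuous L) (hL_nonneg : ∀ x, 0 ≤ x → 0 ≤ L x)
    (hL_pos : ∀ x ∈ Ici s₀, 0 < L x)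
    (hL_lip : LocallyLipschitz L)
    (hL_int : IntegrableOn (fun x => 1 / L x) (Ici s₀))
    (hineq : ∀ x y : ℝ, 0 ≤ x → 0 ≤ y →
      L (h x * l y) ≤ f x y * deriv h x * l y + g x y * h x * deriv l y)
    (hc₁ : 0 ≤ c₁) (hc₂ : 0 ≤ c₂)
    (s : ℝ → ℝ)
    (hs0 : s 0 = s₀)
    (hs' : ∀ t ∈ Ico (0 : ℝ) T, HasDerivAt s (L (s t)) t)
    (w z : ℝ → ℝ)
    (hw0 : w 0 = c₁) (hz0 : z 0 = c₂)
    (hnn : ∀ t ∈ Ico (0 : ℝ) T, 0 ≤ w t ∧ 0 ≤ z t)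
    (hw' : ∀ t ∈ Ico (0 : ℝ) T, HasDerivAt w (f (w t) (z t)) t)
    (hz' : ∀ t ∈ Ico (0 : ℝ) T, HasDerivAt z (g (w t) (z t)) t) :
    (∀ t ∈ Ico (0 : ℝ) T, s t ≤ h (w t) * l (z t)) ∧
      T ≤ ∫ x in Ici s₀, 1 / L x := by
  have hInn : 0 ≤ ∫ x in Ici s₀, 1 / L x := by
    apply setIntegral_nonneg measurableSet_Ici
    intro x hx
    exact le_of_lt (one_div_pos.mpr (hL_pos x hx))
  -- the product function
  set u : ℝ → ℝ := fun r => h (w r) * l (z r) with hu_def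
  set u' : ℝ → ℝ := fun r =>
      f (w r) (z r) * deriv h (w r) * l (z r) + g (w r) (z r) * h (w r) * deriv l (z r)
    with hu'_def
  have hu' : ∀ r ∈ Ico (0 : ℝ) T, HasDerivAt u (u' r) r := by
    intro r hr
    have hdh : HasDerivAt h (deriv h (w r)) (w r) :=
      ((hh_diff.differentiable one_ne_zero) (w r)).hasDerivAt
    have hdl : HasDerivAt l (deriv l (z r)) (z r) :=
      ((hl_diff.differentiable one_ne_zero) (z r)).hasDerivAt
    have h1 : HasDerivAt (fun r => h (w r)) (deriv h (w r) * f (w r) (z r)) r :=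
      hdh.comp r (hw' r hr)
    have h2 : HasDerivAt (fun r => l (z r)) (deriv l (z r) * g (w r) (z r)) r :=
      hdl.comp r (hz' r hr)
    have := h1.mul h2
    refine this.congr_deriv ?_
    simp only [hu'_def]
    ring
  have hu0 : u 0 = s₀ := by simp [hu_def, hw0, hz0, hs₀]
  have hunn : ∀ r ∈ Ico (0 : ℝ) T, 0 ≤ u r := fun r hr =>
    mul_nonneg (hh_nonneg _ (hnn r hr).1) (hl_nonneg _ (hnn r hr).2)
  have huineq : ∀ r ∈ Ico (0 : ℝ) T, L (u r) ≤ u' r := fun r hr =>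
    hineq _ _ (hnn r hr).1 (hnn r hr).2
  -- the integral function F
  set F : ℝ → ℝ := fun y => ∫ x in s₀..y, 1 / L x with hF_def
  have hFderiv : ∀ y ∈ Ici s₀, HasDerivAt F (1 / L y) y := by
    intro y hy
    apply intervalIntegral.integral_hasDerivAt_right
    · apply (hL_int.mono_set _).intervalIntegrable
      rw [uIcc_of_le hy]
      exact Icc_subset_Ici_self
    · exact (measurable_const.div hL_cont.measurable).stronglyMeasurable.stronglyMeasurableAtFilter
    · exact continuousAt_const.div hL_cont.continuousAt (ne_of_gt (hL_pos y hy))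
  have hFs₀ : F s₀ = 0 := intervalIntegral.integral_same
  have hFmono : StrictMonoOn F (Ici s₀) := by
    apply strictMonoOn_of_deriv_pos (convex_Ici s₀)
    · intro y hy
      exact (hFderiv y hy).continuousAt.continuousWithinAt
    · intro y hy
      rw [interior_Ici] at hy
      rw [(hFderiv y (mem_Ici.mpr (le_of_lt hy))).deriv]
      exact one_div_pos.mpr (hL_pos y (mem_Ici.mpr (le_of_lt hy)))
  -- the key pointwise claim
  have key : ∀ t ∈ Ico (0 : ℝ) T, s t ≤ u t ∧ t ≤ ∫ x in Ici s₀, 1 / L x := by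
    intro t ht
    obtain ⟨ht0, htT⟩ := ht
    have hsub : Icc (0 : ℝ) t ⊆ Ico 0 T := fun r hr => ⟨hr.1, lt_of_le_of_lt hr.2 htT⟩
    have hsub' : Ico (0 : ℝ) t ⊆ Ico 0 T := fun r hr => ⟨hr.1, hr.2.trans htT⟩
    have hucont : ContinuousOn u (Icc 0 t) := fun r hr =>
      ((hu' r (hsub hr)).continuousAt).continuousWithinAt
    have hscont : ContinuousOn s (Icc 0 t) := fun r hr =>
      ((hs' r (hsub hr)).continuousAt).continuousWithinAt
    -- s₀ ≤ u on [0, t]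
    have hu_ge : ∀ r ∈ Icc (0 : ℝ) t, s₀ ≤ u r := by
      have := image_le_of_deriv_right_le_deriv_boundary (f := fun _ => s₀) (f' := fun _ => 0)
        (B := u) (B' := u') (a := 0) (b := t) continuousOn_const
        (fun x _ => (hasDerivWithinAt_const x _ s₀))
        (le_of_eq hu0.symm) hucont
        (fun x hx => (hu' x (hsub' hx)).hasDerivWithinAt)
        (fun x hx => le_trans (hL_nonneg _ (hunn x (hsub' hx))) (huineq x (hsub' hx)))
      exact fun r hr => this hr
    -- s₀ ≤ s on [0, t]
    have hs_ge : ∀ r ∈ Icc (0 : ℝ) t, s₀ ≤ s r := by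
      have := image_le_of_deriv_right_lt_deriv_boundary' (f := fun _ => s₀) (f' := fun _ => 0)
        (B := s) (B' := fun r => L (s r)) (a := 0) (b := t) continuousOn_const
        (fun x _ => (hasDerivWithinAt_const x _ s₀))
        (le_of_eq hs0.symm) hscont
        (fun x hx => (hs' x (hsub' hx)).hasDerivWithinAt)
        (fun x _ hx =>
          lt_of_lt_of_le (hL_pos s₀ self_mem_Ici) (le_of_eq (congrArg L hx)))
      exact fun r hr => this hr
    -- F (s r) = r on [0, t]
    have hFs : ∀ r ∈ Icc (0 : ℝ) t, F (s r) = r := by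
      have := eq_of_has_deriv_right_eq (f := fun r => F (s r)) (f' := fun _ => (1 : ℝ))
        (g := fun r => r) (a := 0) (b := t)
        (fun x hx => by
          have hmem := Ico_subset_Icc_self hx
          have hne : L (s x) ≠ 0 := ne_of_gt (hL_pos _ (hs_ge x hmem))
          have := ((hFderiv (s x) (hs_ge x hmem)).comp x (hs' x (hsub' hx))).hasDerivWithinAt
            (s := Ici x)
          refine this.congr_deriv ?_
          simp [hne])
        (fun x _ => (hasDerivWithinAt_id x _))
        (fun r hr => ((hFderiv (s r) (hs_ge r hr)).comp r
          (hs' r (hsub hr))).continuousAt.continuousWithinAt)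
        continuousOn_id
        (by show F (s 0) = (0 : ℝ); rw [hs0]; exact hFs₀)
      exact this
    -- r ≤ F (u r) on [0, t]
    have hFu : ∀ r ∈ Icc (0 : ℝ) t, r ≤ F (u r) := by
      have := image_le_of_deriv_right_le_deriv_boundary (f := fun r => r)
        (f' := fun _ => (1 : ℝ)) (B := fun r => F (u r))
        (B' := fun r => 1 / L (u r) * u' r) (a := 0) (b := t)
        continuousOn_id (fun x _ => hasDerivWithinAt_id x _)
        (by show (0 : ℝ) ≤ F (u 0); rw [hu0, hFs₀])
        (fun r hr => ((hFderiv (u r) (hu_ge r hr)).comp r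
          (hu' r (hsub hr))).continuousAt.continuousWithinAt)
        (fun x hx => ((hFderiv (u x) (hu_ge x (Ico_subset_Icc_self hx))).comp x
          (hu' x (hsub' hx))).hasDerivWithinAt)
        (fun x hx => by
          have hpos : 0 < L (u x) := hL_pos _ (hu_ge x (Ico_subset_Icc_self hx))
          show (1 : ℝ) ≤ 1 / L (u x) * u' x
          rw [one_div_mul_eq_div]
          exact (one_le_div hpos).mpr (huineq x (hsub' hx)))
      exact fun r hr => this hr
    have htmem : t ∈ Icc (0 : ℝ) t := ⟨ht0, le_rfl⟩
    constructor
    · have h1 : F (s t) ≤ F (u t) := by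
        rw [hFs t htmem]; exact hFu t htmem
      exact (hFmono.le_iff_le (hs_ge t htmem) (hu_ge t htmem)).mp h1
    · have h2 : t = F (s t) := (hFs t htmem).symm
      rw [h2]
      show (∫ x in s₀..s t, 1 / L x) ≤ ∫ x in Ici s₀, 1 / L x
      rw [intervalIntegral.integral_of_le (hs_ge t htmem)]
      apply setIntegral_mono_set hL_int
      · filter_upwards [self_mem_ae_restrict measurableSet_Ici] with x hx
        exact le_of_lt (one_div_pos.mpr (hL_pos x hx))
      · exact HasSubset.Subset.eventuallyLE (Set.Ioc_subset_Ioi_self.trans Set.Ioi_subset_Ici_self)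
  constructor
  · exact fun t ht => (key t ht).1
  · by_contra hcon
    push_neg at hcon
    set I := ∫ x in Ici s₀, 1 / L x
    have ht : (I + T) / 2 ∈ Ico (0 : ℝ) T := ⟨by linarith, by linarith⟩
    have := (key _ ht).2
    linarith
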